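/- Let d ≥ 2 and let σ_d : ℝ/ℤ → ℝ/ℤ be the map θ ↦ dθ. If x ∈ ℝ/ℤ is a point such that the chords of the closed unit disk connecting e^{2πi σ_d^i(x)} to e^{2πi σ_d^{i+1}(x)} for i = 0, 1, 2, … are pairwise unlinked (no two of them cross inside the open disk), then x is preperiodic under σ_d (i.e., there exist m ≥ 0 and n ≥ 1 with σ_d^{m+n}(x) = σ_d^m(x)). -/

import Mathlib

open Metric Set

noncomputable section

instance : Fact ((0:ℝ) < 1) := ⟨one_pos⟩

/-- The point on the unit circle in `ℂ` corresponding to `x ∈ ℝ/ℤ`, i.e. `exp(2πix)`. -/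
noncomputable def pt (x : AddCircle (1:ℝ)) : ℂ := (AddCircle.toCircle x : ℂ)

/-- The chord of the closed unit disk joining `pt a` and `pt b`. -/
noncomputable def chord (a b : AddCircle (1:ℝ)) : Set ℂ := segment ℝ (pt a) (pt b)

/-- The map `θ ↦ dθ` on `ℝ/ℤ`. -/
def sig (d : ℕ) (x : AddCircle (1:ℝ)) : AddCircle (1:ℝ) := d • x

/-- Two chords are linked (cross) if they are distinct and intersect in the open unit disk. -/
def Linked (a b x y : AddCircle (1:ℝ)) : Prop :=
  chord a b ≠ chord x y ∧ (chord a b ∩ chord x y ∩ Metric.ball (0:ℂ) 1).Nonempty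

/-- The representative of `x ∈ ℝ/ℤ` in `[0,1)`. -/
noncomputable def rep (x : AddCircle (1:ℝ)) : ℝ := ((AddCircle.equivIco 1 0) x : ℝ)

/-- The open positively oriented arc from `a` to `b`. -/
def arc (a b : AddCircle (1:ℝ)) : Set (AddCircle (1:ℝ)) :=
  {x | 0 < rep (x - a) ∧ rep (x - a) < rep (b - a)}

/-- The closed positively oriented arc from `a` to `b`. -/
def closedArc (a b : AddCircle (1:ℝ)) : Set (AddCircle (1:ℝ)) := arc a b ∪ {a, b}

/-- `(a,b)` is a hole of `A`: `a, b ∈ A` and the nonempty open arc `(a,b)` misses `A`. -/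
def IsHole (A : Set (AddCircle (1:ℝ))) (a b : AddCircle (1:ℝ)) : Prop :=
  a ∈ A ∧ b ∈ A ∧ (arc a b).Nonempty ∧ arc a b ∩ A = ∅

/-- The convex hull in `ℂ` of the set of circle points corresponding to `A ⊆ ℝ/ℤ`. -/
noncomputable def hull (A : Set (AddCircle (1:ℝ))) : Set ℂ := convexHull ℝ (pt '' A)

/-- `p, q, r` are distinct and in strict positive circular order. -/
def cyc (p q r : AddCircle (1:ℝ)) : Prop := 0 < rep (q - p) ∧ rep (q - p) < rep (r - p)

/-- A tuple of circle points is in (weak) positive circular order. -/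
def CircOrd {k : ℕ} [NeZero k] (v : Fin k → AddCircle (1:ℝ)) : Prop :=
  Monotone fun i => rep (v i - v 0)

lemma rep_coe (r : ℝ) : rep (r : AddCircle (1:ℝ)) = Int.fract r := by
  have := AddCircle.coe_equivIco_mk_apply (p := (1:ℝ)) r
  simpa [rep] using this

lemma rep_nonneg (x : AddCircle (1:ℝ)) : 0 ≤ rep x := by
  have := ((AddCircle.equivIco 1 0) x).2.1
  simpa [rep] using this

lemma rep_lt_one (x : AddCircle (1:ℝ)) : rep x < 1 := by
  have := ((AddCircle.equivIco 1 0) x).2.2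
  simpa [rep] using this

lemma coe_int_eq_zero (n : ℤ) : ((n : ℝ) : AddCircle (1:ℝ)) = 0 := by
  rw [AddCircle.coe_eq_zero_iff]
  exact ⟨n, by simp⟩

lemma coe_fract (r : ℝ) : ((Int.fract r : ℝ) : AddCircle (1:ℝ)) = (r : AddCircle (1:ℝ)) := by
  have : (r : ℝ) = Int.fract r + (⌊r⌋ : ℝ) := by rw [Int.fract]; ring
  calc ((Int.fract r : ℝ) : AddCircle (1:ℝ)) = ↑(Int.fract r) + ((⌊r⌋:ℝ) : AddCircle (1:ℝ)) := by
        rw [coe_int_eq_zero, add_zero]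
    _ = _ := by rw [← AddCircle.coe_add, ← this]

lemma coe_rep (x : AddCircle (1:ℝ)) : ((rep x : ℝ) : AddCircle (1:ℝ)) = x := by
  induction x using QuotientAddGroup.induction_on with
  | H r => rw [rep_coe, coe_fract]

lemma coe_inj_Ico {s t : ℝ} (hs : s ∈ Set.Ico (0:ℝ) 1) (ht : t ∈ Set.Ico (0:ℝ) 1)
    (h : (s : AddCircle (1:ℝ)) = (t : AddCircle (1:ℝ))) : s = t := by
  have h2 : ((s - t : ℝ) : AddCircle (1:ℝ)) = 0 := by
    rw [AddCircle.coe_sub, h, sub_self]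
  rw [AddCircle.coe_eq_zero_iff] at h2
  obtain ⟨n, hn⟩ := h2
  have : (n : ℝ) = s - t := by simpa using hn
  have hb : |s - t| < 1 := by
    rw [abs_lt]; constructor <;> nlinarith [hs.1, hs.2, ht.1, ht.2]
  have : n = 0 := by
    by_contra hne
    have : (1:ℝ) ≤ |(n:ℝ)| := by exact_mod_cast Int.one_le_abs hne
    rw [‹(n:ℝ) = s - t›] at this; linarith [hb]
  have := ‹(n:ℝ) = s - t›; rw [‹n = 0›] at this; simp at this; linarith [this]

lemma rep_eq_zero_iff {x : AddCircle (1:ℝ)} : rep x = 0 ↔ x = 0 := by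
  constructor
  · intro h; rw [← coe_rep x, h]; norm_num
  · intro h; subst h
    have : ((0:ℝ) : AddCircle (1:ℝ)) = (0 : AddCircle (1:ℝ)) := by norm_num
    rw [show (0 : AddCircle (1:ℝ)) = ((0:ℝ) : AddCircle (1:ℝ)) by norm_num, rep_coe]
    simp

lemma rep_pos {x : AddCircle (1:ℝ)} (hx : x ≠ 0) : 0 < rep x :=
  lt_of_le_of_ne (rep_nonneg x) (fun h => hx (rep_eq_zero_iff.mp h.symm))

lemma rep_sub (a b : AddCircle (1:ℝ)) : rep (a - b) = Int.fract (rep a - rep b) := by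
  conv_lhs => rw [← coe_rep a, ← coe_rep b, ← AddCircle.coe_sub, rep_coe]

section Trig
open Complex

def ee (r : ℝ) : ℂ := Complex.exp ((2 * Real.pi * r : ℝ) * Complex.I)

lemma FLC (u v : ℂ) : exp ((u+v)*I) - exp ((v-u)*I) = 2*I*sin u*exp (v*I) := by
  rw [Complex.sin]
  rw [show ((u+v)*I) = u*I + v*I by ring, show ((v-u)*I) = -(u*I) + v*I by ring,
    Complex.exp_add, Complex.exp_add]
  ring_nf
  rw [Complex.I_sq]
  ring

lemma FL (x y : ℝ) : exp ((x:ℂ)*I) - exp ((y:ℂ)*I)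
    = 2*I*(Real.sin ((x-y)/2) : ℂ)*exp ((((x+y)/2 : ℝ):ℂ)*I) := by
  have := FLC (((x-y)/2 : ℝ):ℂ) (((x+y)/2 : ℝ):ℂ)
  rw [Complex.ofReal_sin]
  push_cast at this ⊢
  convert this using 3 <;> ring

def cross (A B C : ℂ) : ℝ := ((C - A) * (starRingEnd ℂ) (B - A)).im

lemma conj_exp_I (θ : ℝ) : (starRingEnd ℂ) (exp ((θ:ℂ)*I)) = exp ((-θ:ℝ)*I) := by
  rw [← Complex.exp_conj]
  congr 1
  simp

lemma im_real_mul_exp (r θ : ℝ) : ((r:ℂ) * exp ((θ:ℂ)*I)).im = r * Real.sin θ := by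
  rw [Complex.exp_mul_I]
  simp [Complex.add_im, Complex.mul_im, ← Complex.ofReal_cos, ← Complex.ofReal_sin]

lemma key_prod (σ1 σ2 a b : ℝ) :
    (2*I*(σ1:ℂ)*exp ((a:ℂ)*I)) * (2*(-I)*(σ2:ℂ)*exp ((b:ℂ)*I))
    = ((4*σ1*σ2 : ℝ):ℂ) * exp (((a+b : ℝ):ℂ)*I) := by
  have h1 : exp ((a:ℂ)*I) * exp ((b:ℂ)*I) = exp (((a+b : ℝ):ℂ)*I) := by
    rw [← Complex.exp_add]; congr 1; push_cast; ring
  calc (2*I*(σ1:ℂ)*exp ((a:ℂ)*I)) * (2*(-I)*(σ2:ℂ)*exp ((b:ℂ)*I))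
      = (-4*(I^2))*(σ1:ℂ)*(σ2:ℂ) * (exp ((a:ℂ)*I) * exp ((b:ℂ)*I)) := by ring
    _ = ((4*σ1*σ2 : ℝ):ℂ) * (exp ((a:ℂ)*I) * exp ((b:ℂ)*I)) := by
        rw [Complex.I_sq]; push_cast; ring
    _ = _ := by rw [h1]

lemma cross_one (s t : ℝ) : cross 1 (ee t) (ee s)
    = 4 * Real.sin (Real.pi*s) * Real.sin (Real.pi*t) * Real.sin (Real.pi*(s-t)) := by
  have h1 : ee s - 1 = 2*I*(Real.sin (Real.pi*s) : ℂ)*exp (((Real.pi*s : ℝ):ℂ)*I) := by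
    have := FL (2*Real.pi*s) 0
    simp only [Complex.ofReal_zero, zero_mul, Complex.exp_zero] at this
    rw [ee]
    convert this using 4 <;> ring
  have h2 : ee t - 1 = 2*I*(Real.sin (Real.pi*t) : ℂ)*exp (((Real.pi*t : ℝ):ℂ)*I) := by
    have := FL (2*Real.pi*t) 0
    simp only [Complex.ofReal_zero, zero_mul, Complex.exp_zero] at this
    rw [ee]
    convert this using 4 <;> ring
  rw [cross, h1, h2]
  rw [map_mul, map_mul, map_mul, conj_exp_I, Complex.conj_I, Complex.conj_ofReal,
    (Complex.conj_ofNat 2)]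
  rw [key_prod, im_real_mul_exp, show Real.pi*s + -(Real.pi*t) = Real.pi*(s-t) by ring]

lemma cross_rot (lam A B C : ℂ) (hl : Complex.normSq lam = 1) :
    cross (lam*A) (lam*B) (lam*C) = cross A B C := by
  unfold cross
  rw [show lam*C - lam*A = lam*(C-A) by ring, show lam*B - lam*A = lam*(B-A) by ring]
  rw [map_mul]
  rw [show lam*(C-A) * ((starRingEnd ℂ) lam * (starRingEnd ℂ) (B-A))
      = (lam * (starRingEnd ℂ) lam) * ((C-A) * (starRingEnd ℂ) (B-A)) by ring]
  rw [Complex.mul_conj, hl]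
  simp

lemma chord_normSq (A B : ℂ) (t : ℝ) (hA : Complex.normSq A = 1) (hB : Complex.normSq B = 1) :
    Complex.normSq ((1-t : ℝ) * A + (t:ℝ) * B) = 1 - t*(1-t)*Complex.normSq (A - B) := by
  simp only [Complex.normSq_apply, Complex.add_re, Complex.add_im, Complex.mul_re,
    Complex.mul_im, Complex.ofReal_re, Complex.ofReal_im, Complex.sub_re, Complex.sub_im] at *
  linear_combination (1-t)*hA + t*hB

lemma f_affine (A B C E : ℂ) (t : ℝ) :
    (((1-t : ℝ) * C + (t:ℝ) * E - A) * (starRingEnd ℂ) (B-A)).im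
    = (1-t)*((C-A) * (starRingEnd ℂ) (B-A)).im + t*((E-A) * (starRingEnd ℂ) (B-A)).im := by
  have h : ((1-t : ℝ) * C + (t:ℝ) * E - A) * (starRingEnd ℂ) (B-A)
      = (1-t : ℝ)*((C-A) * (starRingEnd ℂ) (B-A)) + (t:ℝ)*((E-A) * (starRingEnd ℂ) (B-A)) := by
    have h1 : ((1-t : ℝ):ℂ) + (t:ℝ) = 1 := by push_cast; ring
    calc ((1-t : ℝ) * C + (t:ℝ) * E - A) * (starRingEnd ℂ) (B-A)
        = ((1-t : ℝ) * C + (t:ℝ) * E - (((1-t : ℝ):ℂ) + (t:ℝ))*A) * (starRingEnd ℂ) (B-A) := by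
          rw [h1]; ring
      _ = _ := by ring
  rw [h]
  simp [Complex.add_im, Complex.mul_im]

lemma real_collinear {w u : ℂ} (hu : u ≠ 0) (h : (w * (starRingEnd ℂ) u).im = 0) :
    ∃ s : ℝ, w = (s:ℝ) * u := by
  refine ⟨(w * (starRingEnd ℂ) u).re / Complex.normSq u, ?_⟩
  have hns : (Complex.normSq u : ℝ) ≠ 0 := by
    simpa [Complex.normSq_eq_zero] using hu
  have hreal : w * (starRingEnd ℂ) u = (((w * (starRingEnd ℂ) u).re : ℝ) : ℂ) := by
    apply Complex.ext <;> simp [h]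
  have : w * ((starRingEnd ℂ) u * u) = (((w * (starRingEnd ℂ) u).re : ℝ) : ℂ) * u := by
    rw [← mul_assoc, hreal]; simp
  rw [show (starRingEnd ℂ) u * u = ((Complex.normSq u : ℝ):ℂ) by
      rw [mul_comm, Complex.mul_conj]] at this
  have hns' : ((Complex.normSq u : ℝ):ℂ) ≠ 0 := by exact_mod_cast hns
  rw [Complex.ofReal_div, div_mul_eq_mul_div, eq_comm, div_eq_iff hns', eq_comm]
  linear_combination this

lemma mem_segment_of_t {A B : ℂ} {t : ℝ} (h0 : 0 ≤ t) (h1 : t ≤ 1) :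
    ((1-t : ℝ) * A + (t:ℝ) * B) ∈ segment ℝ A B := by
  refine ⟨1-t, t, by linarith, h0, by ring, ?_⟩
  simp [Complex.real_smul]

lemma segments_cross {A B C E : ℂ}
    (hA : Complex.normSq A = 1) (hB : Complex.normSq B = 1)
    (hC : Complex.normSq C = 1) (hE : Complex.normSq E = 1)
    (hAB : A ≠ B)
    (hfC : ((C-A) * (starRingEnd ℂ) (B-A)).im < 0)
    (hfE : 0 < ((E-A) * (starRingEnd ℂ) (B-A)).im) :
    ∃ z, z ∈ segment ℝ A B ∧ z ∈ segment ℝ C E ∧ z ∈ Metric.ball (0:ℂ) 1 := by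
  have hCE : C ≠ E := by intro h; rw [h] at hfC; linarith
  set fC := ((C-A) * (starRingEnd ℂ) (B-A)).im with hfCdef
  set fE := ((E-A) * (starRingEnd ℂ) (B-A)).im with hfEdef
  set t := fC / (fC - fE) with ht
  have hden : fC - fE < 0 := by linarith
  have hden0 : fC - fE ≠ 0 := ne_of_lt hden
  have ht0 : 0 < t := div_pos_of_neg_of_neg hfC hden
  have ht1 : t < 1 := by rw [ht, div_lt_one_of_neg hden]; linarith
  set z := ((1-t : ℝ) * C + (t:ℝ) * E) with hz
  have hft : ((z - A) * (starRingEnd ℂ) (B-A)).im = 0 := by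
    rw [hz, f_affine, ← hfCdef, ← hfEdef, ht]
    field_simp
    ring
  have hzsq : Complex.normSq z = 1 - t*(1-t)*Complex.normSq (C - E) := chord_normSq C E t hC hE
  have hCEpos : 0 < Complex.normSq (C - E) := by
    rw [Complex.normSq_pos]; exact sub_ne_zero_of_ne hCE
  have hX : 0 < t*(1-t)*Complex.normSq (C - E) :=
    mul_pos (mul_pos ht0 (by linarith)) hCEpos
  have hzlt : Complex.normSq z < 1 := by linarith
  have hzCE : z ∈ segment ℝ C E := mem_segment_of_t (le_of_lt ht0) (le_of_lt ht1)
  obtain ⟨s, hs⟩ := real_collinear (sub_ne_zero_of_ne (Ne.symm hAB)) hft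
  have hzAB' : z = (1-s : ℝ) * A + (s:ℝ) * B := by
    push_cast at hs ⊢
    linear_combination hs
  have hzsq2 : Complex.normSq z = 1 - s*(1-s)*Complex.normSq (A - B) := by
    rw [hzAB']; exact chord_normSq A B s hA hB
  have hABpos : 0 < Complex.normSq (A - B) := by
    rw [Complex.normSq_pos]; exact sub_ne_zero_of_ne hAB
  have h1 : 0 < s*(1-s)*Complex.normSq (A - B) := by linarith
  have hss : 0 < s * (1-s) := by
    by_contra hh
    push_neg at hh
    have := mul_nonpos_of_nonpos_of_nonneg hh hABpos.le
    linarith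
  have hs0 : 0 < s := by nlinarith [sq_nonneg s]
  have hs1 : s < 1 := by nlinarith [sq_nonneg (1-s)]
  have hzAB : z ∈ segment ℝ A B := by
    rw [hzAB']; exact mem_segment_of_t hs0.le hs1.le
  refine ⟨z, hzAB, hzCE, ?_⟩
  rw [Metric.mem_ball, dist_zero_right]
  have habs : ‖z‖ < 1 := by
    nlinarith [Complex.sq_norm z, norm_nonneg z]
  exact habs


end Trig

section Geometry
open Complex

lemma normSq_pt (x : AddCircle (1:ℝ)) : Complex.normSq (pt x) = 1 := by
  have := (AddCircle.toCircle x).2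
  rw [pt, Complex.normSq_eq_norm_sq]
  simp [Circle.norm_coe]

lemma pt_zero : pt (0 : AddCircle (1:ℝ)) = 1 := by
  rw [pt, AddCircle.toCircle_zero]; rfl

lemma pt_add (u v : AddCircle (1:ℝ)) : pt (u + v) = pt u * pt v := by
  rw [pt, pt, pt, AddCircle.toCircle_add]; rfl

lemma pt_inj : Function.Injective pt := by
  intro u v h
  exact AddCircle.injective_toCircle one_ne_zero (Subtype.ext h)

lemma pt_eq (z : AddCircle (1:ℝ)) : pt z = ee (rep z) := by
  conv_lhs => rw [← coe_rep z]
  rw [pt, AddCircle.toCircle_apply_mk, Circle.coe_exp, ee]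
  norm_num

lemma cross_pt (a b c : AddCircle (1:ℝ)) :
    cross (pt a) (pt b) (pt c) = cross 1 (ee (rep (b-a))) (ee (rep (c-a))) := by
  have h1 : Complex.normSq (pt (-a)) = 1 := normSq_pt _
  rw [← cross_rot (pt (-a)) (pt a) (pt b) (pt c) h1]
  rw [← pt_add, ← pt_add, ← pt_add]
  rw [show -a + a = (0 : AddCircle (1:ℝ)) by abel, pt_zero]
  rw [show -a + b = b - a by abel, show -a + c = c - a by abel]
  rw [pt_eq (b-a), pt_eq (c-a)]

lemma cross_pt_neg {a b c : AddCircle (1:ℝ)}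
    (h1 : 0 < rep (c-a)) (h2 : rep (c-a) < rep (b-a)) :
    cross (pt a) (pt b) (pt c) < 0 := by
  rw [cross_pt, cross_one]
  have hb1 : rep (b-a) < 1 := rep_lt_one _
  have pi_pos := Real.pi_pos
  have s1 : 0 < Real.sin (Real.pi * rep (c-a)) :=
    Real.sin_pos_of_pos_of_lt_pi (by nlinarith) (by nlinarith)
  have s2 : 0 < Real.sin (Real.pi * rep (b-a)) :=
    Real.sin_pos_of_pos_of_lt_pi (by nlinarith) (by nlinarith)
  have s3 : Real.sin (Real.pi * (rep (c-a) - rep (b-a))) < 0 := by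
    apply Real.sin_neg_of_neg_of_neg_pi_lt <;> nlinarith
  nlinarith [mul_neg_of_pos_of_neg (mul_pos s1 s2) s3]

lemma cross_pt_pos {a b e : AddCircle (1:ℝ)}
    (h2 : 0 < rep (b-a)) (h3 : rep (b-a) < rep (e-a)) :
    0 < cross (pt a) (pt b) (pt e) := by
  rw [cross_pt, cross_one]
  have hb1 : rep (e-a) < 1 := rep_lt_one _
  have pi_pos := Real.pi_pos
  have s1 : 0 < Real.sin (Real.pi * rep (e-a)) :=
    Real.sin_pos_of_pos_of_lt_pi (by nlinarith) (by nlinarith)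
  have s2 : 0 < Real.sin (Real.pi * rep (b-a)) :=
    Real.sin_pos_of_pos_of_lt_pi (by nlinarith) (by nlinarith)
  have s3 : 0 < Real.sin (Real.pi * (rep (e-a) - rep (b-a))) :=
    Real.sin_pos_of_pos_of_lt_pi (by nlinarith) (by nlinarith)
  nlinarith [mul_pos (mul_pos s1 s2) s3]

lemma rep_sub_ne_zero {u v : AddCircle (1:ℝ)} (h : 0 < rep (u - v)) : u ≠ v := by
  intro he
  rw [he, sub_self] at h
  rw [rep_eq_zero_iff.mpr rfl] at h
  linarith

lemma interleave_linked {a b c e : AddCircle (1:ℝ)}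
    (h1 : 0 < rep (c-a)) (h2 : rep (c-a) < rep (b-a)) (h3 : rep (b-a) < rep (e-a)) :
    Linked a b c e := by
  have hba : b ≠ a := rep_sub_ne_zero (by linarith)
  have hAB : pt a ≠ pt b := fun h => hba (pt_inj h.symm)
  have hfC : ((pt c - pt a) * (starRingEnd ℂ) (pt b - pt a)).im < 0 := cross_pt_neg h1 h2
  have hfE : 0 < ((pt e - pt a) * (starRingEnd ℂ) (pt b - pt a)).im :=
    cross_pt_pos (by linarith) h3
  obtain ⟨z, hz1, hz2, hz3⟩ := segments_cross (normSq_pt a) (normSq_pt b) (normSq_pt c)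
    (normSq_pt e) hAB hfC hfE
  constructor
  · -- chords distinct
    intro hchord
    have hcmem : pt c ∈ chord a b := by
      rw [hchord]; exact left_mem_segment ℝ (pt c) (pt e)
    obtain ⟨p, q, hp, hq, hpq, hsum⟩ := hcmem
    have hq1 : p = 1 - q := by linarith
    have hsum' : ((1-q : ℝ) : ℂ) * pt a + (q:ℝ) * pt b = pt c := by
      rw [← hsum, hq1]; simp [Complex.real_smul]
    have hns : Complex.normSq (pt c) = 1 - q*(1-q)*Complex.normSq (pt a - pt b) := by
      rw [← hsum']; exact chord_normSq _ _ q (normSq_pt a) (normSq_pt b)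
    rw [normSq_pt c] at hns
    have hABpos : 0 < Complex.normSq (pt a - pt b) := by
      rw [Complex.normSq_pos]; exact sub_ne_zero_of_ne hAB
    have hq0 : q*(1-q) = 0 := by
      have h0 : q*(1-q)*Complex.normSq (pt a - pt b) = 0 := by linarith
      rcases mul_eq_zero.mp h0 with h|h
      · exact h
      · exact absurd h (ne_of_gt hABpos)
    have : q = 0 ∨ q = 1 := by
      rcases mul_eq_zero.mp hq0 with h|h
      · left; exact h
      · right; linarith
    rcases this with h|h
    · subst h
      have : pt c = pt a := by rw [← hsum']; norm_num
      have : c = a := pt_inj this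
      exact rep_sub_ne_zero h1 (by rw [this])
    · subst h
      have : pt c = pt b := by rw [← hsum']; norm_num
      have hcb : c = b := pt_inj this
      rw [hcb] at h2
      linarith
  · exact ⟨z, ⟨hz1, hz2⟩, hz3⟩

lemma linked_swap {a b c e : AddCircle (1:ℝ)} (h : Linked a b c e) : Linked a b e c := by
  obtain ⟨h1, h2⟩ := h
  have hs : chord c e = chord e c := segment_symm ℝ _ _
  exact ⟨by rw [← hs]; exact h1, by rw [← hs]; exact h2⟩

end Geometry


section Comb

lemma rep_inj {z z' : AddCircle (1:ℝ)} (h : rep z = rep z') : z = z' := by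
  rw [← coe_rep z, ← coe_rep z', h]

lemma fract_sub_self {s t : ℝ} (hs0 : 0 ≤ s) (hs1 : s < 1) (ht0 : 0 ≤ t) (ht1 : t < 1)
    (h : t ≤ s) : Int.fract (s - t) = s - t :=
  Int.fract_eq_self.mpr ⟨by linarith, by linarith⟩

lemma fract_sub_add_one {s t : ℝ} (hd : t - s < 1)
    (h : s < t) : Int.fract (s - t) = s - t + 1 := by
  have : Int.fract (s - t) = Int.fract (s - t + 1) := (Int.fract_add_one (s-t)).symm
  rw [this]
  exact Int.fract_eq_self.mpr ⟨by linarith, by linarith⟩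

lemma rep_sub_base (z y x0 : AddCircle (1:ℝ)) :
    rep (z - y) = Int.fract (rep (z - x0) - rep (y - x0)) := by
  rw [show z - y = (z - x0) - (y - x0) by abel, rep_sub]

variable (orb : ℕ → AddCircle (1:ℝ))

lemma tail_side (hinj : Function.Injective orb)
    (hunl : ∀ i j : ℕ, i ≠ j → ¬ Linked (orb i) (orb (i+1)) (orb j) (orb (j+1)))
    (i : ℕ) : ∀ m, i + 2 ≤ m →
    (rep (orb m - orb i) < rep (orb (i+1) - orb i) ↔
     rep (orb (i+2) - orb i) < rep (orb (i+1) - orb i)) := by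
  intro m hm
  induction m, hm using Nat.le_induction with
  | base => exact Iff.rfl
  | succ m hm IH =>
    set t := rep (orb (i+1) - orb i) with htd
    set p := rep (orb m - orb i) with hpd
    set q := rep (orb (m+1) - orb i) with hqd
    have hsub : ∀ {r s : ℕ}, r ≠ s → orb r - orb s ≠ 0 := by
      intro r s hrs he
      exact hrs (hinj (sub_eq_zero.mp he))
    have hp0 : 0 < p := rep_pos (hsub (by omega))
    have hq0 : 0 < q := rep_pos (hsub (by omega))
    have hrepne : ∀ {r s : ℕ}, r ≠ s → rep (orb r - orb i) ≠ rep (orb s - orb i) := by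
      intro r s hrs he
      have := rep_inj he
      have : orb r = orb s := by
        have h2 := congrArg (fun z => z + orb i) this
        simpa [sub_add_cancel] using h2
      exact hrs (hinj this)
    have hpt : p ≠ t := hrepne (by omega)
    have hqt : q ≠ t := hrepne (by omega)
    have him : i ≠ m := by omega
    suffices hs : (q < t ↔ p < t) by rw [hs]; exact IH
    constructor
    · intro hq
      by_contra hp
      have hp' : t < p := lt_of_le_of_ne (not_lt.mp hp) (Ne.symm hpt)
      have hL : Linked (orb i) (orb (i+1)) (orb (m+1)) (orb m) :=
        interleave_linked hq0 hq hp'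
      exact hunl i m him (linked_swap hL)
    · intro hp
      by_contra hq
      have hq' : t < q := lt_of_le_of_ne (not_lt.mp hq) (Ne.symm hqt)
      have hL : Linked (orb i) (orb (i+1)) (orb m) (orb (m+1)) :=
        interleave_linked hp0 hp hq'
      exact hunl i m him hL

end Comb

noncomputable def Fint (u : ℕ → ℝ) : ℕ → ℝ × ℝ
  | 0 => if u 2 < u 1 then (0, u 1) else (u 1, 1)
  | (k+1) => if u (k+3) < u (k+2) then ((Fint u k).1, u (k+2)) else (u (k+2), (Fint u k).2)

section Comb2

variable (orb : ℕ → AddCircle (1:ℝ))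

def uu (m : ℕ) : ℝ := rep (orb m - orb 0)

def INV (k : ℕ) : Prop :=
  0 ≤ (Fint (uu orb) k).1 ∧ (Fint (uu orb) k).2 ≤ 1 ∧
  (Fint (uu orb) k).1 < (Fint (uu orb) k).2 ∧
  (uu orb (k+1) = (Fint (uu orb) k).1 ∨ uu orb (k+1) = (Fint (uu orb) k).2) ∧
  (∀ m, k + 2 ≤ m → (Fint (uu orb) k).1 < uu orb m ∧ uu orb m < (Fint (uu orb) k).2)

lemma inv_all (hinj : Function.Injective orb)
    (hunl : ∀ i j : ℕ, i ≠ j → ¬ Linked (orb i) (orb (i+1)) (orb j) (orb (j+1))) :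
    ∀ k, INV orb k := by
  set u := uu orb with hu
  have hu0 : ∀ m, 1 ≤ m → 0 < u m := by
    intro m hm
    exact rep_pos (fun he => absurd (hinj (sub_eq_zero.mp he)) (by omega))
  have hu1 : ∀ m, u m < 1 := fun m => rep_lt_one _
  have hunn : ∀ m, 0 ≤ u m := fun m => rep_nonneg _
  have huinj : ∀ {r s : ℕ}, u r = u s → r = s := by
    intro r s he
    have := rep_inj he
    have h2 : orb r = orb s := by
      have h3 := congrArg (fun z => z + orb 0) this
      simpa [sub_add_cancel] using h3
    exact hinj h2
  intro k
  induction k with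
  | zero =>
    have hts := tail_side orb hinj hunl 0
    by_cases h12 : u 2 < u 1
    · have hF : Fint u 0 = (0, u 1) := by rw [Fint, if_pos h12]
      refine ⟨by rw [hF], by rw [hF]; exact (hu1 1).le, by rw [hF]; exact hu0 1 le_rfl,
        Or.inr (by rw [hF]), ?_⟩
      intro m hm
      rw [hF]
      exact ⟨hu0 m (by omega), by
        have := (hts m (by omega)).mpr h12
        simpa [hu, uu] using this⟩
    · have hF : Fint u 0 = (u 1, 1) := by rw [Fint, if_neg h12]
      refine ⟨by rw [hF]; exact hunn 1, by rw [hF], by rw [hF]; exact hu1 1,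
        Or.inl (by rw [hF]), ?_⟩
      intro m hm
      rw [hF]
      refine ⟨?_, hu1 m⟩
      have hnlt : ¬ (u m < u 1) := by
        intro hlt
        exact h12 ((hts m (by omega)).mp (by simpa [hu, uu] using hlt))
      exact lt_of_le_of_ne (not_lt.mp hnlt) (fun he => absurd (huinj he) (by omega))
  | succ k IH =>
    obtain ⟨ha0, hb1, hab, hend, htail⟩ := IH
    simp only [← hu] at *
    set a := (Fint u k).1 with had
    set b := (Fint u k).2 with hbd
    -- KEY claim
    have hKEY : ∀ m, k + 3 ≤ m → (u m < u (k+2) ↔ u (k+3) < u (k+2)) := by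
      have hts := tail_side orb hinj hunl (k+1)
      have hw : ∀ m, k + 2 ≤ m →
          rep (orb m - orb (k+1)) = u m - u (k+1) + (if u (k+1) = a then 0 else 1) := by
        intro m hm
        have h1 := htail m hm
        rw [rep_sub_base (orb m) (orb (k+1)) (orb 0)]
        have hgoal : Int.fract (rep (orb m - orb 0) - rep (orb (k+1) - orb 0))
            = Int.fract (u m - u (k+1)) := rfl
        rw [hgoal]
        rcases hend with hcase | hcase
        · rw [if_pos hcase, hcase]
          rw [fract_sub_self (hunn m) (hu1 m) ha0 (lt_of_lt_of_le hab hb1) h1.1.le]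
          ring
        · have hne : ¬ (u (k+1) = a) := by
            intro he; rw [he] at hcase; exact absurd hcase (ne_of_lt hab)
          rw [if_neg hne, hcase]
          rw [fract_sub_add_one (by linarith [h1.1]) h1.2]
      intro m hm
      have h1 := hts m (by omega)
      rw [hw m (by omega), hw (k+2) (by omega), hw (k+3) (by omega)] at h1
      constructor
      · intro hlt
        have : u m - u (k+1) + (if u (k+1) = a then 0 else 1) <
            u (k+2) - u (k+1) + (if u (k+1) = a then 0 else 1) := by
          rcases ite_eq_or_eq (u (k+1) = a) (0:ℝ) 1 with he | he <;> rw [he] <;> linarith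
        have h2 := h1.mp this
        rcases ite_eq_or_eq (u (k+1) = a) (0:ℝ) 1 with he | he <;> rw [he] at h2 <;> linarith
      · intro hlt
        have : u (k+3) - u (k+1) + (if u (k+1) = a then 0 else 1) <
            u (k+2) - u (k+1) + (if u (k+1) = a then 0 else 1) := by
          rcases ite_eq_or_eq (u (k+1) = a) (0:ℝ) 1 with he | he <;> rw [he] <;> linarith
        have h2 := h1.mpr this
        rcases ite_eq_or_eq (u (k+1) = a) (0:ℝ) 1 with he | he <;> rw [he] at h2 <;> linarith
    have hk2 := htail (k+2) (by omega)
    by_cases hbr : u (k+3) < u (k+2)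
    · have hF : Fint u (k+1) = (a, u (k+2)) := by rw [Fint, if_pos hbr, ← had]
      refine ⟨by rw [hF]; exact ha0, by rw [hF]; exact (hu1 _).le,
        by rw [hF]; exact hk2.1, Or.inr (by rw [hF]), ?_⟩
      intro m hm
      rw [hF]
      exact ⟨(htail m (by omega)).1, (hKEY m (by omega)).mpr hbr⟩
    · have hF : Fint u (k+1) = (u (k+2), b) := by rw [Fint, if_neg hbr, ← hbd]
      refine ⟨by rw [hF]; exact (hunn _), by rw [hF]; exact hb1,
        by rw [hF]; exact hk2.2, Or.inl (by rw [hF]), ?_⟩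
      intro m hm
      rw [hF]
      refine ⟨?_, (htail m (by omega)).2⟩
      have hnlt : ¬ (u m < u (k+2)) := fun hlt => hbr ((hKEY m (by omega)).mp hlt)
      exact lt_of_le_of_ne (not_lt.mp hnlt)
        (fun he => absurd (huinj he.symm) (by omega))

end Comb2


section Approach

variable (orb : ℕ → AddCircle (1:ℝ))

lemma norm_coe_le (r : ℝ) : ‖((r : ℝ) : AddCircle (1:ℝ))‖ ≤ |r| := by
  rw [AddCircle.norm_eq]
  simpa using round_le r 0

lemma dist_orb_le (m : ℕ) (A : ℝ) :
    dist (orb m) (orb 0 + ((A : ℝ) : AddCircle (1:ℝ))) ≤ |rep (orb m - orb 0) - A| := by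
  rw [dist_eq_norm]
  have h1 : orb m - (orb 0 + ((A : ℝ) : AddCircle (1:ℝ)))
      = ((rep (orb m - orb 0) - A : ℝ) : AddCircle (1:ℝ)) := by
    rw [AddCircle.coe_sub, coe_rep]
    abel
  rw [h1]
  exact norm_coe_le _

lemma approach (hinj : Function.Injective orb)
    (hunl : ∀ i j : ℕ, i ≠ j → ¬ Linked (orb i) (orb (i+1)) (orb j) (orb (j+1))) :
    ∃ P Q : AddCircle (1:ℝ), ∀ ε > 0, ∃ M, ∀ m, M ≤ m →
      dist (orb m) P < ε ∨ dist (orb m) Q < ε := by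
  have hINV := inv_all orb hinj hunl
  set u := uu orb with hu
  set al : ℕ → ℝ := fun k => (Fint u k).1 with hal
  set be : ℕ → ℝ := fun k => (Fint u k).2 with hbe
  have hmono_a : Monotone al := by
    apply monotone_nat_of_le_succ
    intro k
    obtain ⟨ha0, hb1, hab, hend, htail⟩ := hINV k
    show (Fint u k).1 ≤ (Fint u (k+1)).1
    rw [Fint]
    by_cases hbr : u (k+3) < u (k+2)
    · rw [if_pos hbr]
    · rw [if_neg hbr]
      exact (htail (k+2) (by omega)).1.le
  have hmono_b : ∀ k, be (k+1) ≤ be k := by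
    intro k
    obtain ⟨ha0, hb1, hab, hend, htail⟩ := hINV k
    show (Fint u (k+1)).2 ≤ (Fint u k).2
    rw [Fint]
    by_cases hbr : u (k+3) < u (k+2)
    · rw [if_pos hbr]
      exact (htail (k+2) (by omega)).2.le
    · rw [if_neg hbr]
  have hmono_b' : Antitone be := antitone_nat_of_succ_le hmono_b
  have hbdd_a : BddAbove (Set.range al) := by
    refine ⟨1, ?_⟩
    rintro y ⟨k, rfl⟩
    obtain ⟨ha0, hb1, hab, _, _⟩ := hINV k
    exact le_trans hab.le hb1
  have hbdd_b : BddBelow (Set.range be) := by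
    refine ⟨0, ?_⟩
    rintro y ⟨k, rfl⟩
    obtain ⟨ha0, hb1, hab, _, _⟩ := hINV k
    exact le_trans ha0 hab.le
  set A := ⨆ k, al k with hA
  set B := ⨅ k, be k with hB
  refine ⟨orb 0 + ((A : ℝ) : AddCircle (1:ℝ)), orb 0 + ((B : ℝ) : AddCircle (1:ℝ)), ?_⟩
  intro ε hε
  obtain ⟨k1, hk1⟩ : ∃ k1, A - ε < al k1 := by
    by_contra hcon
    push_neg at hcon
    have : A ≤ A - ε := ciSup_le hcon
    linarith
  obtain ⟨k2, hk2⟩ : ∃ k2, be k2 < B + ε := by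
    by_contra hcon
    push_neg at hcon
    have : B + ε ≤ B := le_ciInf hcon
    linarith
  refine ⟨max k1 k2 + 1, ?_⟩
  intro m hm
  obtain ⟨k, rfl⟩ : ∃ k, m = k + 1 := ⟨m - 1, by omega⟩
  have hkk1 : k1 ≤ k := by omega
  have hkk2 : k2 ≤ k := by omega
  obtain ⟨ha0, hb1, hab, hend, htail⟩ := hINV k
  rcases hend with hcase | hcase
  · left
    calc dist (orb (k+1)) (orb 0 + ((A : ℝ) : AddCircle (1:ℝ)))
        ≤ |rep (orb (k+1) - orb 0) - A| := dist_orb_le orb (k+1) A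
      _ < ε := by
          have h1 : al k ≤ A := le_ciSup hbdd_a k
          have h2 : A - ε < al k := lt_of_lt_of_le hk1 (hmono_a hkk1)
          have h3 : rep (orb (k+1) - orb 0) = al k := hcase
          rw [h3, abs_lt]
          constructor <;> linarith
  · right
    calc dist (orb (k+1)) (orb 0 + ((B : ℝ) : AddCircle (1:ℝ)))
        ≤ |rep (orb (k+1) - orb 0) - B| := dist_orb_le orb (k+1) B
      _ < ε := by
          have h1 : B ≤ be k := ciInf_le hbdd_b k
          have h2 : be k < B + ε := lt_of_le_of_lt (hmono_b' hkk2) hk2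
          have h3 : rep (orb (k+1) - orb 0) = be k := hcase
          rw [h3, abs_lt]
          constructor <;> linarith

end Approach


section Dyn

lemma sig_iter (d : ℕ) (k : ℕ) (z : AddCircle (1:ℝ)) :
    (sig d)^[k] z = (d^k : ℕ) • z := by
  induction k with
  | zero => simp
  | succ k IH =>
    rw [Function.iterate_succ_apply', IH]
    show d • ((d^k : ℕ) • z) = (d^(k+1) : ℕ) • z
    rw [smul_smul, pow_succ, mul_comm]

lemma sig_iter_sub (d : ℕ) (k : ℕ) (z w : AddCircle (1:ℝ)) :
    (sig d)^[k] z - (sig d)^[k] w = (d^k : ℕ) • (z - w) := by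
  rw [sig_iter, sig_iter, smul_sub]

lemma exists_norm_rep (v : AddCircle (1:ℝ)) :
    ∃ r : ℝ, ((r : ℝ) : AddCircle (1:ℝ)) = v ∧ |r| = ‖v‖ := by
  refine ⟨rep v - (round (rep v) : ℤ), ?_, ?_⟩
  · push_cast
    rw [AddCircle.coe_sub, coe_rep, coe_int_eq_zero, sub_zero]
  · conv_rhs => rw [← coe_rep v]
    rw [AddCircle.norm_eq]
    norm_num

lemma cnorm_nsmul_le (n : ℕ) (v : AddCircle (1:ℝ)) : ‖n • v‖ ≤ (n : ℝ) * ‖v‖ := by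
  obtain ⟨r, hr, hn⟩ := exists_norm_rep v
  have h1 : n • v = (((n : ℝ) * r : ℝ) : AddCircle (1:ℝ)) := by
    rw [← hr]
    push_cast
    rw [← nsmul_eq_mul]
    exact (AddCircle.coe_nsmul _).symm
  rw [h1, ← hn]
  calc ‖(((n : ℝ) * r : ℝ) : AddCircle (1:ℝ))‖ ≤ |(n:ℝ) * r| := norm_coe_le _
    _ = (n:ℝ) * |r| := by rw [abs_mul, Nat.abs_cast]

lemma norm_nsmul_eq (n : ℕ) (v : AddCircle (1:ℝ)) (h : (n : ℝ) * ‖v‖ < 1/2) :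
    ‖n • v‖ = (n : ℝ) * ‖v‖ := by
  obtain ⟨r, hr, hn⟩ := exists_norm_rep v
  have h1 : n • v = (((n : ℝ) * r : ℝ) : AddCircle (1:ℝ)) := by
    rw [← hr]
    push_cast
    rw [← nsmul_eq_mul]
    exact (AddCircle.coe_nsmul _).symm
  have habs : |(n:ℝ) * r| < 1/2 := by
    rw [abs_mul, Nat.abs_cast, hn]; exact h
  rw [h1, AddCircle.norm_eq]
  have hround : round ((1:ℝ)⁻¹ * ((n:ℝ)*r)) = 0 := by
    rw [round_eq_zero_iff]
    constructor
    · simp only [inv_one, one_mul]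
      linarith [abs_lt.mp habs |>.1]
    · simp only [inv_one, one_mul]
      linarith [abs_lt.mp habs |>.2]
  rw [hround]
  norm_num
  left; exact hn

lemma dist_sig_le (d : ℕ) (a b : AddCircle (1:ℝ)) :
    dist (sig d a) (sig d b) ≤ (d : ℝ) * dist a b := by
  rw [dist_eq_norm, dist_eq_norm]
  have : sig d a - sig d b = d • (a - b) := by
    show d • a - d • b = d • (a - b)
    rw [smul_sub]
  rw [this]
  exact cnorm_nsmul_le d (a - b)

lemma exp_blow (d : ℕ) (hd : 2 ≤ d) (x : AddCircle (1:ℝ))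
    (hinj : Function.Injective (fun n => (sig d)^[n] x))
    (R : AddCircle (1:ℝ)) (k : ℕ) (hk : 1 ≤ k) (hR : (sig d)^[k] R = R)
    (ε : ℝ) (hε : 0 < ε) (hsm : ((d^k : ℕ) : ℝ) * ε ≤ 1/2)
    (M : ℕ)
    (H : ∀ m, M ≤ m → dist ((sig d)^[m] x) R < ε → dist ((sig d)^[m+k] x) R < ε)
    (m0 : ℕ) (hm0M : M ≤ m0) (hm0 : dist ((sig d)^[m0] x) R < ε) : False := by
  set orb : ℕ → AddCircle (1:ℝ) := fun n => (sig d)^[n] x with horbdef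
  have horb : ∀ m j : ℕ, orb (m+j) = (sig d)^[j] (orb m) := by
    intro m j
    show (sig d)^[m+j] x = (sig d)^[j] ((sig d)^[m] x)
    rw [show m + j = j + m by omega, Function.iterate_add_apply]
  have hdk : (2:ℝ) ≤ ((d^k : ℕ) : ℝ) := by
    have : 2 ≤ d^k := le_trans hd (Nat.le_self_pow (by omega) d)
    exact_mod_cast this
  by_cases heq : orb m0 = R
  · have h2 : orb (m0 + k) = orb m0 := by
      rw [horb, heq, hR]
    have := hinj h2
    omega
  · have hδ : 0 < dist (orb m0) R := dist_pos.mpr heq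
    set δ := dist (orb m0) R with hδd
    have hstep : ∀ m, dist (orb m) R < ε →
        dist (orb (m+k)) R = ((d^k : ℕ) : ℝ) * dist (orb m) R := by
      intro m hm
      rw [horb]
      conv_lhs => rw [← hR]
      rw [dist_eq_norm, sig_iter_sub]
      rw [norm_nsmul_eq]
      · rw [dist_eq_norm]
      · rw [← dist_eq_norm]
        calc ((d^k : ℕ) : ℝ) * dist (orb m) R < ((d^k : ℕ) : ℝ) * ε := by
              apply mul_lt_mul_of_pos_left hm
              linarith
          _ ≤ 1/2 := hsm
    have hgrow : ∀ j : ℕ, dist (orb (m0 + j*k)) R < ε ∧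
        dist (orb (m0 + j*k)) R = ((d^k : ℕ) : ℝ)^j * δ := by
      intro j
      induction j with
      | zero => simp only [zero_mul, add_zero, pow_zero, one_mul]; exact ⟨hm0, rfl⟩
      | succ j IH =>
        have hidx : m0 + (j+1)*k = (m0 + j*k) + k := by ring
        have hMle : M ≤ m0 + j*k := by omega
        constructor
        · rw [hidx]
          exact H _ hMle IH.1
        · rw [hidx, hstep _ IH.1, IH.2, pow_succ]
          ring
    obtain ⟨j, hj⟩ := pow_unbounded_of_one_lt (ε/δ) (one_lt_two)
    have h2 : ε < 2^j * δ := by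
      rw [div_lt_iff₀ hδ] at hj
      linarith
    have h3 : (2:ℝ)^j ≤ ((d^k : ℕ) : ℝ)^j := by
      apply pow_le_pow_left₀ (by norm_num) hdk
    have h4 := (hgrow j).1
    rw [(hgrow j).2] at h4
    nlinarith
end Dyn


section Endgame

lemma iterate_one_fix (d : ℕ) (R : AddCircle (1:ℝ)) (h : sig d R = R) :
    (sig d)^[1] R = R := by simpa using h

lemma iterate_two_fix (d : ℕ) (R : AddCircle (1:ℝ)) (h : sig d (sig d R) = R) :
    (sig d)^[2] R = R := by
  show (sig d)^[1+1] R = R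
  rw [Function.iterate_add_apply]
  simpa using h

lemma conv_contra (d : ℕ) (hd : 2 ≤ d) (x : AddCircle (1:ℝ))
    (hinj : Function.Injective (fun n => (sig d)^[n] x))
    (R : AddCircle (1:ℝ))
    (hconv : ∀ ε > (0:ℝ), ∃ M, ∀ m, M ≤ m → dist ((sig d)^[m] x) R < ε) : False := by
  have hdpos : (0:ℝ) < d := by positivity
  -- R is fixed
  have hfix : sig d R = R := by
    by_contra hne
    have hc : 0 < dist (sig d R) R := dist_pos.mpr hne
    set c := dist (sig d R) R with hcd
    have hε' : (0:ℝ) < c/(d+1) := by positivity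
    obtain ⟨M, hM⟩ := hconv (c/(d+1)) hε'
    have h1 : dist (sig d R) ((sig d)^[M+1] x) ≤ (d:ℝ) * dist R ((sig d)^[M] x) := by
      have : (sig d)^[M+1] x = sig d ((sig d)^[M] x) := Function.iterate_succ_apply' _ _ _
      rw [this]
      exact dist_sig_le d R ((sig d)^[M] x)
    have h2 := hM M le_rfl
    have h3 := hM (M+1) (by omega)
    rw [dist_comm] at h2
    have htri : c ≤ dist (sig d R) ((sig d)^[M+1] x) + dist ((sig d)^[M+1] x) R :=
      dist_triangle _ _ _
    have hd1 : dist (sig d R) ((sig d)^[M+1] x) < (d:ℝ) * (c/(d+1)) := by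
      calc dist (sig d R) ((sig d)^[M+1] x) ≤ (d:ℝ) * dist R ((sig d)^[M] x) := h1
        _ < (d:ℝ) * (c/(d+1)) := by
            apply mul_lt_mul_of_pos_left _ hdpos
            exact h2
    have : c < (d:ℝ) * (c/(d+1)) + c/(d+1) := by linarith
    have heq : (d:ℝ) * (c/(d+1)) + c/(d+1) = c := by field_simp
    linarith
  set ε : ℝ := 1/(4*(d:ℝ)) with hεd
  have hε : 0 < ε := by positivity
  obtain ⟨M, hM⟩ := hconv ε hε
  refine exp_blow d hd x hinj R 1 le_rfl (iterate_one_fix d R hfix) ε hε ?_ M ?_ M le_rfl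
    (hM M le_rfl)
  · rw [hεd]
    have : ((d^1 : ℕ) : ℝ) = (d:ℝ) := by norm_num
    rw [this]
    rw [mul_one_div]
    rw [div_le_iff₀ (by positivity)]
    linarith
  · intro m hm _
    exact hM (m+1) (by omega)

lemma main_contra (d : ℕ) (hd : 2 ≤ d) (x : AddCircle (1:ℝ))
    (hinj : Function.Injective (fun n => (sig d)^[n] x))
    (P Q : AddCircle (1:ℝ))
    (hPQ : ∀ ε > (0:ℝ), ∃ M, ∀ m, M ≤ m →
      dist ((sig d)^[m] x) P < ε ∨ dist ((sig d)^[m] x) Q < ε) : False := by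
  set orb : ℕ → AddCircle (1:ℝ) := fun n => (sig d)^[n] x with horbdef
  have hdpos : (0:ℝ) < d := by positivity
  -- limit point predicate
  by_cases hLQ : ∀ ε > (0:ℝ), ∀ N : ℕ, ∃ m, N ≤ m ∧ dist (orb m) Q < ε
  case neg =>
    push_neg at hLQ
    obtain ⟨ε0, hε0, N, hN⟩ := hLQ
    apply conv_contra d hd x hinj P
    intro ε hε
    obtain ⟨M, hM⟩ := hPQ (min ε ε0) (lt_min hε hε0)
    refine ⟨max M N, fun m hm => ?_⟩
    rcases hM m (by omega) with h | h
    · exact lt_of_lt_of_le h (min_le_left _ _)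
    · exact absurd (lt_of_lt_of_le h (min_le_right _ _)) (not_lt.mpr (hN m (by omega)))
  case pos =>
  by_cases hLP : ∀ ε > (0:ℝ), ∀ N : ℕ, ∃ m, N ≤ m ∧ dist (orb m) P < ε
  case neg =>
    push_neg at hLP
    obtain ⟨ε0, hε0, N, hN⟩ := hLP
    apply conv_contra d hd x hinj Q
    intro ε hε
    obtain ⟨M, hM⟩ := hPQ (min ε ε0) (lt_min hε hε0)
    refine ⟨max M N, fun m hm => ?_⟩
    rcases hM m (by omega) with h | h
    · exact absurd (lt_of_lt_of_le h (min_le_right _ _)) (not_lt.mpr (hN m (by omega)))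
    · exact lt_of_lt_of_le h (min_le_left _ _)
  case pos =>
  by_cases hPQe : P = Q
  · apply conv_contra d hd x hinj P
    intro ε hε
    obtain ⟨M, hM⟩ := hPQ ε hε
    refine ⟨M, fun m hm => ?_⟩
    rcases hM m hm with h | h
    · exact h
    · rw [hPQe]; exact h
  · have hg : 0 < dist P Q := dist_pos.mpr hPQe
    set g := dist P Q with hgd
    -- each limit point maps into {P, Q}
    have hmapsto : ∀ S : AddCircle (1:ℝ),
        (∀ ε > (0:ℝ), ∀ N : ℕ, ∃ m, N ≤ m ∧ dist (orb m) S < ε) →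
        sig d S = P ∨ sig d S = Q := by
      intro S hS
      by_contra hcon
      push_neg at hcon
      obtain ⟨h1, h2⟩ := hcon
      have hc1 : 0 < dist (sig d S) P := dist_pos.mpr h1
      have hc2 : 0 < dist (sig d S) Q := dist_pos.mpr h2
      set c := min (dist (sig d S) P) (dist (sig d S) Q) with hcd
      have hc : 0 < c := lt_min hc1 hc2
      have hε : (0:ℝ) < c/(2*d+2) := by positivity
      obtain ⟨M, hM⟩ := hPQ (c/(2*d+2)) hε
      obtain ⟨m, hmM, hmS⟩ := hS (c/(2*d+2)) hε M
      have hlip : dist (orb (m+1)) (sig d S) ≤ (d:ℝ) * dist (orb m) S := by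
        have : orb (m+1) = sig d (orb m) := Function.iterate_succ_apply' _ _ _
        rw [this]
        exact dist_sig_le d (orb m) S
      have hbound : dist (orb (m+1)) (sig d S) < (d:ℝ) * (c/(2*d+2)) :=
        lt_of_le_of_lt hlip (mul_lt_mul_of_pos_left hmS hdpos)
      have hkey : ((d:ℝ)+1) * (c/(2*d+2)) = c/2 := by field_simp
      rcases hM (m+1) (by omega) with h | h
      · have ht : dist (sig d S) P ≤ dist (sig d S) (orb (m+1)) + dist (orb (m+1)) P :=
          dist_triangle _ _ _
        rw [dist_comm (sig d S) (orb (m+1))] at ht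
        have hcle : c ≤ dist (sig d S) P := min_le_left _ _
        linarith
      · have ht : dist (sig d S) Q ≤ dist (sig d S) (orb (m+1)) + dist (orb (m+1)) Q :=
          dist_triangle _ _ _
        rw [dist_comm (sig d S) (orb (m+1))] at ht
        have hcle : c ≤ dist (sig d S) Q := min_le_right _ _
        linarith
    have hP2 := hmapsto P hLP
    have hQ2 := hmapsto Q hLQ
    obtain ⟨R, S, hfix2, hRlim, hgRS, hdich⟩ :
        ∃ R S : AddCircle (1:ℝ), sig d (sig d R) = R ∧
          (∀ ε > (0:ℝ), ∀ N : ℕ, ∃ m, N ≤ m ∧ dist (orb m) R < ε) ∧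
          dist R S = g ∧
          (∀ ε > (0:ℝ), ∃ M, ∀ m, M ≤ m → dist (orb m) R < ε ∨ dist (orb m) S < ε) := by
      rcases hP2 with h | h
      · exact ⟨P, Q, by rw [h, h], hLP, rfl, hPQ⟩
      · rcases hQ2 with h' | h'
        · exact ⟨P, Q, by rw [h, h'], hLP, rfl, hPQ⟩
        · refine ⟨Q, P, by rw [h', h'], hLQ, dist_comm Q P, ?_⟩
          intro ε hε
          obtain ⟨M, hM⟩ := hPQ ε hε
          exact ⟨M, fun m hm => (hM m hm).symm⟩
    set ε := min (g/((d:ℝ)^2+1)) (1/(4*(d:ℝ)^2)) with hεd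
    have hε : 0 < ε := lt_min (by positivity) (by positivity)
    have hε1 : ε ≤ g/((d:ℝ)^2+1) := min_le_left _ _
    have hε2 : ε ≤ 1/(4*(d:ℝ)^2) := min_le_right _ _
    obtain ⟨M, hM⟩ := hdich ε hε
    have H : ∀ m, M ≤ m → dist (orb m) R < ε → dist (orb (m+2)) R < ε := by
      intro m hm hlt
      have e1 : orb (m+1) = sig d (orb m) := Function.iterate_succ_apply' _ _ _
      have e2 : orb (m+2) = sig d (orb (m+1)) := Function.iterate_succ_apply' _ _ _
      have h1 : dist (orb (m+1)) (sig d R) ≤ (d:ℝ) * dist (orb m) R := by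
        rw [e1]; exact dist_sig_le d (orb m) R
      have h2 : dist (orb (m+2)) R ≤ (d:ℝ) * dist (orb (m+1)) (sig d R) := by
        conv_lhs => rw [e2, ← hfix2]
        exact dist_sig_le d (orb (m+1)) (sig d R)
      have h3 : dist (orb (m+2)) R < (d:ℝ)^2 * ε := by
        have hd1 : dist (orb (m+1)) (sig d R) < (d:ℝ) * ε :=
          lt_of_le_of_lt h1 (mul_lt_mul_of_pos_left hlt hdpos)
        calc dist (orb (m+2)) R ≤ (d:ℝ) * dist (orb (m+1)) (sig d R) := h2
          _ < (d:ℝ) * ((d:ℝ) * ε) := mul_lt_mul_of_pos_left hd1 hdpos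
          _ = (d:ℝ)^2 * ε := by ring
      rcases hM (m+2) (by omega) with h | h
      · exact h
      · exfalso
        have ht : dist R S ≤ dist (orb (m+2)) R + dist (orb (m+2)) S := by
          rw [dist_comm (orb (m+2)) R]
          exact dist_triangle _ _ _
        have hgle : ε * ((d:ℝ)^2+1) ≤ g :=
          (le_div_iff₀ (by positivity : (0:ℝ) < (d:ℝ)^2+1)).mp hε1
        nlinarith [hgRS]
    obtain ⟨m0, hm0M, hm0⟩ := hRlim ε hε M
    have hsm : ((d^2 : ℕ) : ℝ) * ε ≤ 1/2 := by
      have hc : ((d^2 : ℕ) : ℝ) = (d:ℝ)^2 := by push_cast; ring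
      rw [hc]
      have : (d:ℝ)^2 * ε ≤ (d:ℝ)^2 * (1/(4*(d:ℝ)^2)) :=
        mul_le_mul_of_nonneg_left hε2 (by positivity)
      have he : (d:ℝ)^2 * (1/(4*(d:ℝ)^2)) = 1/4 := by field_simp
      linarith
    exact exp_blow d hd x hinj R 2 (by omega) (iterate_two_fix d R hfix2) ε hε hsm M H
      m0 hm0M hm0
end Endgame

/-- if the chords joining consecutive points of the forward
orbit of `x` under `σ_d` are pairwise unlinked, then `x` is preperiodic. -/
theorem stmt_0 (d : ℕ) (hd : 2 ≤ d) (x : AddCircle (1:ℝ))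
    (hunlinked : ∀ i j : ℕ, i ≠ j →
      ¬ Linked ((sig d)^[i] x) ((sig d)^[i+1] x) ((sig d)^[j] x) ((sig d)^[j+1] x)) :
    ∃ m n : ℕ, 1 ≤ n ∧ (sig d)^[m + n] x = (sig d)^[m] x := by
  by_cases hper : ∃ i j : ℕ, i < j ∧ (sig d)^[i] x = (sig d)^[j] x
  · obtain ⟨i, j, hij, he⟩ := hper
    refine ⟨i, j - i, by omega, ?_⟩
    rw [show i + (j - i) = j by omega]
    exact he.symm
  · exfalso
    push_neg at hper
    have hinj : Function.Injective (fun n => (sig d)^[n] x) := by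
      intro a b hab
      by_contra hne
      rcases Nat.lt_or_ge a b with h | h
      · exact hper a b h hab
      · have hba : b < a := by omega
        exact hper b a hba hab.symm
    obtain ⟨P, Q, hPQ⟩ := approach (fun n => (sig d)^[n] x) hinj
      (fun i j hij => hunlinked i j hij)
    exact main_contra d hd x hinj P Q hPQ
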